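/- If F ∈ K[r₁,…,r_m] is μ-symmetric with μ-gist F̊ ∈ K[z₁,…,z_n], and P(x) = Σ_{i=0}^n c_i x^{n-i} ∈ K[x] has m distinct roots ρ₁,…,ρ_m with multiplicities μ₁,…,μ_m, then F(ρ₁,…,ρ_m) = F̊(−c₁/c₀, c₂/c₀, …, (−1)^n c_n/c₀); in particular F(ρ₁,…,ρ_m) ∈ K. -/

import Mathlib

open MvPolynomial Finset

/-- If `F ∈ K[r₁,…,r_m]` is `μ`-symmetric with `μ`-gist `F̊ ∈ K[z₁,…,z_n]`,
and `P(x) = Σ_{i=0}^n c_i x^(n-i)` has `m` distinct roots `ρ₁,…,ρ_m` with multiplicities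
`μ₁,…,μ_m`, then `F(ρ) = F̊(-c₁/c₀, c₂/c₀, …, (-1)^n c_n / c₀)`. -/
theorem stmt0 {K : Type*} [Field K] [CharZero K] (n m : ℕ)
    (μ : Fin m → ℕ) (hμ : ∀ j, 1 ≤ μ j) (hsum : ∑ j, μ j = n)
    (asg : Fin n → Fin m) (hmono : Monotone asg)
    (hasg : ∀ j, (Finset.univ.filter (fun i => asg i = j)).card = μ j)
    (F : MvPolynomial (Fin m) K) (Fhat Fgist : MvPolynomial (Fin n) K)
    (hsym : Fhat.IsSymmetric)
    (hlift : MvPolynomial.aeval (fun i => (X (asg i) : MvPolynomial (Fin m) K)) Fhat = F)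
    (hgist : MvPolynomial.aeval
      (fun i : Fin n => MvPolynomial.esymm (Fin n) K ((i : ℕ) + 1)) Fgist = Fhat)
    (c : ℕ → K) (hc0 : c 0 ≠ 0) (ρ : Fin m → K) (hρ : Function.Injective ρ)
    (P : Polynomial K)
    (hP : P = ∑ i ∈ Finset.range (n + 1), Polynomial.C (c i) * Polynomial.X ^ (n - i))
    (hroots : P = Polynomial.C (c 0) * ∏ j, (Polynomial.X - Polynomial.C (ρ j)) ^ (μ j)) :
    MvPolynomial.eval ρ F
      = MvPolynomial.eval
          (fun k : Fin n => (-1 : K) ^ ((k : ℕ) + 1) * c ((k : ℕ) + 1) / c 0) Fgist := by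
  -- helper: eval ∘ aeval composition
  have comp_eval : ∀ {σ τ : Type} [Fintype σ] [Fintype τ]
      (g : σ → MvPolynomial τ K) (v : τ → K) (p : MvPolynomial σ K),
      MvPolynomial.eval v (MvPolynomial.aeval g p)
        = MvPolynomial.eval (fun i => MvPolynomial.eval v (g i)) p := by
    intro σ τ _ _ g v p
    have h := congrArg (fun φ : MvPolynomial σ K →ₐ[K] K => φ p)
      (comp_aeval (f := g) (φ := MvPolynomial.aeval v))
    simpa using h
  set f : Fin n → K := fun i => ρ (asg i) with hf
  -- rewrite LHS as eval f Fhat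
  have h1 : MvPolynomial.eval ρ F = MvPolynomial.eval f Fhat := by
    rw [← hlift, comp_eval]; simp [hf]
  -- product over fibers
  have hprod : (∏ j, (Polynomial.X - Polynomial.C (ρ j)) ^ (μ j))
      = ∏ i : Fin n, (Polynomial.X - Polynomial.C (f i)) := by
    rw [← Finset.prod_fiberwise Finset.univ asg
      (fun i => Polynomial.X - Polynomial.C (f i))]
    refine Finset.prod_congr rfl fun j _ => ?_
    rw [Finset.prod_congr rfl (fun i hi => ?_), Finset.prod_const, hasg j]
    simp only [Finset.mem_filter] at hi
    show Polynomial.X - Polynomial.C (ρ (asg i)) = _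
    rw [hi.2]
  -- key: value of esymm at f
  have key : ∀ k : Fin n, MvPolynomial.eval f (esymm (Fin n) K ((k : ℕ) + 1))
      = (-1 : K) ^ ((k : ℕ) + 1) * c ((k : ℕ) + 1) / c 0 := by
    intro k
    have hk1 : (k : ℕ) + 1 ≤ n := k.2
    have hcard : Multiset.card (Finset.univ.val.map f) = n := by simp
    -- coefficient of P at n - (k+1), from the roots form
    have hc1 : P.coeff (n - ((k : ℕ) + 1))
        = c 0 * ((-1 : K) ^ ((k : ℕ) + 1)
            * (Finset.univ.val.map f).esymm ((k : ℕ) + 1)) := by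
      rw [hroots, hprod, Polynomial.coeff_C_mul]
      have : (∏ i : Fin n, (Polynomial.X - Polynomial.C (f i)))
          = ((Finset.univ.val.map f).map fun t => Polynomial.X - Polynomial.C t).prod := by
        rw [Multiset.map_map]; rfl
      rw [this, Multiset.prod_X_sub_C_coeff _ (by simpa using hk1), hcard]
      have : n - (n - ((k : ℕ) + 1)) = (k : ℕ) + 1 := by omega
      rw [this]
    -- coefficient of P at n - (k+1), from the sum form
    have hc2 : P.coeff (n - ((k : ℕ) + 1)) = c ((k : ℕ) + 1) := by
      rw [hP, Polynomial.finset_sum_coeff]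
      rw [Finset.sum_eq_single ((k : ℕ) + 1)]
      · simp
      · intro i hi hne
        simp only [Polynomial.coeff_C_mul, Polynomial.coeff_X_pow]
        rw [if_neg, mul_zero]
        simp only [Finset.mem_range] at hi
        omega
      · intro h; exact absurd (Finset.mem_range.mpr (by omega)) h
    have heval : MvPolynomial.eval f (esymm (Fin n) K ((k : ℕ) + 1))
        = (Finset.univ.val.map f).esymm ((k : ℕ) + 1) := by
      have := aeval_esymm_eq_multiset_esymm (Fin n) K ((k : ℕ) + 1) f
      simpa using this
    rw [heval, eq_div_iff hc0]
    have hpow : ((-1 : K) ^ ((k : ℕ) + 1)) * ((-1 : K) ^ ((k : ℕ) + 1)) = 1 := by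
      rw [← pow_add]; exact Even.neg_one_pow ⟨(k : ℕ) + 1, by ring⟩
    rw [hc1] at hc2
    calc (Finset.univ.val.map f).esymm ((k : ℕ) + 1) * c 0
        = ((-1 : K) ^ ((k : ℕ) + 1)) * ((-1 : K) ^ ((k : ℕ) + 1))
            * (Finset.univ.val.map f).esymm ((k : ℕ) + 1) * c 0 := by rw [hpow]; ring
      _ = (-1 : K) ^ ((k : ℕ) + 1) * (c 0 * ((-1 : K) ^ ((k : ℕ) + 1)
            * (Finset.univ.val.map f).esymm ((k : ℕ) + 1))) := by ring
      _ = (-1 : K) ^ ((k : ℕ) + 1) * c ((k : ℕ) + 1) := by rw [hc2]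
  rw [h1, ← hgist, comp_eval]
  exact congrArg (fun v => MvPolynomial.eval v Fgist) (funext key)
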